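/- Let \varphi(z) = a z^2 with 0 < |a| < 1. If \lambda is a nonzero eigenvalue of the operator f \mapsto f' \circ \varphi acting on analytic functions on the unit disk (i.e., there exists nonzero analytic f with f'(\varphi(z)) = \lambda f(z) for all z), then \lambda = 2a. -/

import Mathlib

open Metric Nat

open FormalMultilinearSeries in
private lemma coeff_unique6 {cc cc' : ℕ → ℂ} {g : ℂ → ℂ}
    (h : ∀ᶠ z in nhds (0:ℂ), HasSum (fun n => cc n * z ^ n) (g z))
    (h' : ∀ᶠ z in nhds (0:ℂ), HasSum (fun n => cc' n * z ^ n) (g z)) : cc = cc' := by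
  have key : ∀ (c : ℕ → ℂ), (∀ᶠ z in nhds (0:ℂ), HasSum (fun n => c n * z ^ n) (g z)) →
      HasFPowerSeriesAt g (ofScalars ℂ c) 0 := by
    intro c hc
    rw [hasFPowerSeriesAt_iff]
    filter_upwards [hc] with z hz
    have hcoe : ∀ n, (ofScalars ℂ c).coeff n = c n := by
      intro n
      simp [FormalMultilinearSeries.coeff, FormalMultilinearSeries.ofScalars, Pi.one_def]
    have : (fun n => z ^ n • (ofScalars ℂ c).coeff n) = fun n => c n * z ^ n := by
      funext n
      rw [hcoe, smul_eq_mul, mul_comm]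
    rw [this, zero_add]
    exact hz
  exact ofScalars_series_injective ℂ ℂ ((key cc h).eq_formalMultilinearSeries (key cc' h'))

/-- For `φ(z) = a z²` with `0 < |a| < 1`: any nonzero eigenvalue of `f ↦ f' ∘ φ` on
analytic functions on the unit disk equals `2a`. -/
theorem stmt6 (a : ℂ) (ha0 : a ≠ 0) (ha : ‖a‖ < 1) (lam : ℂ) (hlam : lam ≠ 0)
    (f : ℂ → ℂ) (hf : DifferentiableOn ℂ f (ball 0 1))
    (hfne : ∃ z ∈ ball (0 : ℂ) 1, f z ≠ 0)
    (heig : ∀ z ∈ ball (0 : ℂ) 1, deriv f (a * z ^ 2) = lam * f z) :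
    lam = 2 * a := by
  set d : ℕ → ℂ := fun n => iteratedDeriv n f 0 with hd
  -- Taylor series of f on the ball
  have hTf : ∀ z ∈ ball (0:ℂ) 1, HasSum (fun n => ((n ! : ℂ)⁻¹ * d n) * z ^ n) (f z) := by
    intro z hz
    have := Complex.hasSum_taylorSeries_on_ball hf hz
    simp only [sub_zero, smul_eq_mul] at this
    convert this using 2 with n
    · rfl
    ring
  -- deriv f is differentiable on the ball
  have hfan : AnalyticOnNhd ℂ f (ball 0 1) := hf.analyticOnNhd isOpen_ball
  have hdf : DifferentiableOn ℂ (deriv f) (ball 0 1) :=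
    (hfan.deriv).differentiableOn
  -- Taylor series of deriv f on the ball
  have hTdf : ∀ w ∈ ball (0:ℂ) 1,
      HasSum (fun n => ((n ! : ℂ)⁻¹ * d (n+1)) * w ^ n) (deriv f w) := by
    intro w hw
    have := Complex.hasSum_taylorSeries_on_ball hdf hw
    simp only [sub_zero, smul_eq_mul] at this
    convert this using 2 with n
    · rfl
    rw [hd]
    simp only [iteratedDeriv_succ']
    ring
  -- membership
  have hmem : ∀ z : ℂ, z ∈ ball (0:ℂ) 1 → a * z ^ 2 ∈ ball (0:ℂ) 1 := by
    intro z hz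
    rw [mem_ball_zero_iff] at hz ⊢
    have h1 : ‖a * z ^ 2‖ = ‖a‖ * ‖z‖ ^ 2 := by
      rw [norm_mul, norm_pow]
    rw [h1]
    have h0a : (0:ℝ) ≤ ‖a‖ := norm_nonneg _
    have h0z : (0:ℝ) ≤ ‖z‖ := norm_nonneg _
    nlinarith
  -- the composed series
  set E : ℕ → ℂ := fun m => if m % 2 = 0 then ((m/2)! : ℂ)⁻¹ * a ^ (m/2) * d (m/2+1) else 0
    with hE
  have hcomp : ∀ z ∈ ball (0:ℂ) 1, HasSum (fun m => E m * z ^ m) (deriv f (a * z ^ 2)) := by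
    intro z hz
    have h1 := hTdf (a * z ^ 2) (hmem z hz)
    have hinj : Function.Injective (fun n : ℕ => 2 * n) :=
      fun x y h => Nat.eq_of_mul_eq_mul_left two_pos h
    have hside : ∀ m, m ∉ Set.range (fun n : ℕ => 2 * n) → E m * z ^ m = 0 := by
      intro m hm
      have : m % 2 = 1 := by
        rcases Nat.even_or_odd m with he | ho
        · obtain ⟨kk, hkk⟩ := he
          refine absurd ⟨kk, ?_⟩ hm
          show 2 * kk = m
          omega
        · exact Nat.odd_iff.mp ho
      simp [hE, this]
    rw [← hinj.hasSum_iff hside]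
    convert h1 using 1
    funext n
    have hmod : (2 * n) % 2 = 0 := by omega
    have hdiv : (2 * n) / 2 = n := by omega
    simp only [Function.comp, hE, hmod, if_true, hdiv]
    ring
  -- the RHS series
  have hrhs : ∀ z ∈ ball (0:ℂ) 1,
      HasSum (fun m => (lam * ((m ! : ℂ)⁻¹ * d m)) * z ^ m) (lam * f z) := by
    intro z hz
    have := (hTf z hz).mul_left lam
    convert this using 2 with m
    · rfl
    ring
  -- coefficient identification
  have hball : ball (0:ℂ) 1 ∈ nhds (0:ℂ) := ball_mem_nhds 0 one_pos
  have hcoeff : E = fun m => lam * ((m ! : ℂ)⁻¹ * d m) := by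
    apply coeff_unique6 (g := fun z => lam * f z)
    · filter_upwards [hball] with z hz
      rw [← heig z hz]
      exact hcomp z hz
    · filter_upwards [hball] with z hz
      exact hrhs z hz
  have hodd : ∀ m, m % 2 = 1 → d m = 0 := by
    intro m hm
    have := congrFun hcoeff m
    simp only [hE, hm] at this
    norm_num at this
    rcases this with h | h
    · exact absurd h hlam
    rcases h with h | h
    · exact absurd h (Nat.cast_ne_zero.mpr m.factorial_ne_zero)
    · exact h
  have heven : ∀ n : ℕ, ((n ! : ℂ)⁻¹ * a ^ n * d (n+1)) = lam * (((2*n) ! : ℂ)⁻¹ * d (2*n)) := by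
    intro n
    have := congrFun hcoeff (2 * n)
    have hmod : (2 * n) % 2 = 0 := by omega
    have hdiv : (2 * n) / 2 = n := by omega
    simpa only [hE, hmod, if_true, hdiv] using this
  by_cases hd2 : d 2 = 0
  · exfalso
    have hall : ∀ n, d n = 0 := by
      intro n
      induction n using Nat.strong_induction_on with
      | _ n ih =>
        rcases Nat.even_or_odd n with he | ho
        · obtain ⟨k, hk⟩ := he
          have hkn : n = 2 * k := by omega
          rcases Nat.lt_or_ge k 2 with hk2 | hk2
          · rcases (by omega : k = 0 ∨ k = 1) with rfl | rfl
            · -- n = 0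
              have h0 := heven 0
              have h1 : d 1 = 0 := hodd 1 (by norm_num)
              rw [h1] at h0
              norm_num [Nat.factorial] at h0
              subst hkn
              tauto
            · subst hkn; exact hd2
          · -- k ≥ 2 : d (2k) determined by d (k+1) with k+1 < 2k
            have hlt : k + 1 < n := by omega
            have hdk1 : d (k + 1) = 0 := ih _ hlt
            have h0 := heven k
            rw [hdk1] at h0
            rw [hkn]
            have hf2 : ((2 * k)! : ℂ) ≠ 0 := Nat.cast_ne_zero.mpr (Nat.factorial_ne_zero _)
            simpa [hlam, Nat.factorial_ne_zero] using h0
        · exact hodd n (Nat.odd_iff.mp ho)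
    obtain ⟨z, hz, hfz⟩ := hfne
    apply hfz
    have := hTf z hz
    simp only [hall, mul_zero, zero_mul] at this
    exact this.unique hasSum_zero
  · -- d 2 ≠ 0 forces lam = 2 a
    have h1 := heven 1
    norm_num [Nat.factorial] at h1
    -- h1 : a * d 2 = lam * (2⁻¹ * d 2) (up to normalization)
    have h2 : (lam - 2 * a) * d 2 = 0 := by
      linear_combination -2 * h1
    rcases mul_eq_zero.mp h2 with h | h
    · exact sub_eq_zero.mp h
    · exact absurd h hd2
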